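/- (Quadratic smoothness of the log-partition function with constant 1/2.) Let V be a nonempty finite type and define A : (V → ℝ) → ℝ by A(z) := Real.log (∑_{i ∈ V} Real.exp (z i)) and softmax z i := Real.exp (z i) / ∑_{j ∈ V} Real.exp (z j). Then for all a b : V → ℝ, A(b) ≤ A(a) + ∑_{i ∈ V} softmax a i * (b i − a i) + (1/4) * ∑_{i ∈ V} (b i − a i)². -/

import Mathlib

open Finset Real Set

/-- Taylor-type bound: if `h'' ≤ K` on `[0,1]`, then `h 1 ≤ h 0 + h' 0 + K/2`. -/
lemma taylor_bound_aux (h h' h'' : ℝ → ℝ) (K : ℝ)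
    (hd1 : ∀ t, HasDerivAt h (h' t) t)
    (hd2 : ∀ t, HasDerivAt h' (h'' t) t)
    (hK : ∀ t ∈ Set.Icc (0:ℝ) 1, h'' t ≤ K) :
    h 1 ≤ h 0 + h' 0 + K / 2 := by
  set φ : ℝ → ℝ := fun t => h 0 + h' 0 * t + K * t ^ 2 / 2 - h t with hφdef
  set ψ : ℝ → ℝ := fun t => h' 0 + K * t - h' t with hψdef
  have hφ : ∀ t, HasDerivAt φ (ψ t) t := by
    intro t
    have h2 : HasDerivAt (fun t : ℝ => K * t ^ 2 / 2) (K * t) t := by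
      have := ((hasDerivAt_pow 2 t).const_mul K).div_const 2
      simpa using this.congr_deriv (by push_cast; ring)
    have h1 : HasDerivAt (fun t : ℝ => h 0 + h' 0 * t) (h' 0) t := by
      simpa using ((hasDerivAt_id t).const_mul (h' 0)).const_add (h 0)
    simpa [hφdef, hψdef] using (h1.fun_add h2).fun_sub (hd1 t)
  have hψ : ∀ t, HasDerivAt ψ (K - h'' t) t := by
    intro t
    have h1 : HasDerivAt (fun t : ℝ => h' 0 + K * t) K t := by
      simpa using ((hasDerivAt_id t).const_mul K).const_add (h' 0)
    simpa [hψdef] using h1.fun_sub (hd2 t)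
  have hψmono : MonotoneOn ψ (Set.Icc (0:ℝ) 1) := by
    apply monotoneOn_of_deriv_nonneg (convex_Icc 0 1)
    · exact (fun t _ => (hψ t).continuousAt.continuousWithinAt)
    · exact (fun t _ => (hψ t).differentiableAt.differentiableWithinAt)
    · intro t ht
      rw [interior_Icc] at ht
      rw [(hψ t).deriv]
      have := hK t ⟨le_of_lt ht.1, le_of_lt ht.2⟩
      linarith
  have hψ0 : ψ 0 = 0 := by simp [hψdef]
  have hψnn : ∀ t ∈ Set.Icc (0:ℝ) 1, 0 ≤ ψ t := by
    intro t ht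
    have := hψmono (Set.left_mem_Icc.2 zero_le_one) ht ht.1
    rwa [hψ0] at this
  have hφmono : MonotoneOn φ (Set.Icc (0:ℝ) 1) := by
    apply monotoneOn_of_deriv_nonneg (convex_Icc 0 1)
    · exact (fun t _ => (hφ t).continuousAt.continuousWithinAt)
    · exact (fun t _ => (hφ t).differentiableAt.differentiableWithinAt)
    · intro t ht
      rw [interior_Icc] at ht
      rw [(hφ t).deriv]
      exact hψnn t ⟨le_of_lt ht.1, le_of_lt ht.2⟩
  have h01 := hφmono (Set.left_mem_Icc.2 zero_le_one) (Set.right_mem_Icc.2 zero_le_one)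
    zero_le_one
  have hφ0 : φ 0 = 0 := by simp [hφdef]
  have hφ1 : φ 1 = h 0 + h' 0 + K / 2 - h 1 := by simp [hφdef]
  rw [hφ0, hφ1] at h01
  linarith

/-- Variance bound: for positive weights `w`,
`(∑ w x²)(∑ w) − (∑ w x)² ≤ (½ ∑ x²)(∑ w)²`. -/
lemma var_aux {V : Type*} [Fintype V] [Nonempty V] (w x : V → ℝ) (hw : ∀ i, 0 < w i) :
    (∑ i, w i * x i * x i) * (∑ i, w i) - (∑ i, w i * x i) * (∑ i, w i * x i)
      ≤ (1 / 2 * ∑ i, x i ^ 2) * (∑ i, w i) ^ 2 := by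
  classical
  obtain ⟨j, -, hj⟩ := Finset.exists_max_image Finset.univ x Finset.univ_nonempty
  obtain ⟨k, -, hk⟩ := Finset.exists_min_image Finset.univ x Finset.univ_nonempty
  set S := ∑ i, w i with hS
  set S1 := ∑ i, w i * x i with hS1
  set S2 := ∑ i, w i * x i * x i with hS2
  set c : ℝ := (x j + x k) / 2 with hc
  set B : ℝ := ((x j - x k) / 2) ^ 2 with hB
  have hSpos : 0 < S := Finset.sum_pos (fun i _ => hw i) Finset.univ_nonempty
  have hsum : ∑ i, w i * (x i - c) ^ 2 = S2 - 2 * c * S1 + c ^ 2 * S := by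
    have h1 : ∀ i : V, w i * (x i - c) ^ 2
        = w i * x i * x i - 2 * c * (w i * x i) + c ^ 2 * w i := fun i => by ring
    simp only [h1, Finset.sum_add_distrib, Finset.sum_sub_distrib, ← Finset.mul_sum]
    rfl
  have hbound : ∑ i, w i * (x i - c) ^ 2 ≤ B * S := by
    rw [hS, Finset.mul_sum]
    apply Finset.sum_le_sum
    intro i _
    rw [mul_comm (B) (w i)]
    apply mul_le_mul_of_nonneg_left _ (le_of_lt (hw i))
    rw [hB]
    apply sq_le_sq'
    · have := hk i (Finset.mem_univ i); linarith
    · have := hj i (Finset.mem_univ i); linarith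
  have hBle : B ≤ 1 / 2 * ∑ i, x i ^ 2 := by
    have hsq : 0 ≤ ∑ i, x i ^ 2 := Finset.sum_nonneg fun i _ => sq_nonneg _
    by_cases hjk : j = k
    · rw [hB, hjk]
      simp
      linarith
    · have hpair : x j ^ 2 + x k ^ 2 ≤ ∑ i, x i ^ 2 := by
        have : ∑ i ∈ ({j, k} : Finset V), x i ^ 2 = x j ^ 2 + x k ^ 2 :=
          Finset.sum_pair hjk
        rw [← this]
        exact Finset.sum_le_sum_of_subset_of_nonneg (Finset.subset_univ _)
          (fun i _ _ => sq_nonneg _)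
      rw [hB]
      nlinarith [sq_nonneg (x j + x k)]
  have key : S2 * S - S1 * S1
      = S * (∑ i, w i * (x i - c) ^ 2) - (S1 - c * S) ^ 2 := by
    rw [hsum]; ring
  have : S * (∑ i, w i * (x i - c) ^ 2) ≤ S * (B * S) :=
    mul_le_mul_of_nonneg_left hbound (le_of_lt hSpos)
  calc S2 * S - S1 * S1 ≤ S * (B * S) := by
        rw [key]; nlinarith [sq_nonneg (S1 - c * S)]
    _ ≤ (1 / 2 * ∑ i, x i ^ 2) * S ^ 2 := by nlinarith [hSpos]

/-- Quadratic smoothness of the log-partition function with constant `1/2`: for all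
`a b : V → ℝ`, `A b ≤ A a + ⟨softmax a, b − a⟩ + (1/4) * ‖b − a‖²` where
`A z = log (∑ i, exp (z i))` and `softmax z i = exp (z i) / ∑ j, exp (z j)`. -/
theorem logSumExp_smoothness
    {V : Type*} [Fintype V] [Nonempty V] (a b : V → ℝ) :
    Real.log (∑ i, Real.exp (b i)) ≤
      Real.log (∑ i, Real.exp (a i)) +
        (∑ i, (Real.exp (a i) / ∑ j, Real.exp (a j)) * (b i - a i)) +
        (1 / 4) * ∑ i, (b i - a i) ^ 2 := by
  set x : V → ℝ := fun i => b i - a i with hx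
  set S : ℝ → ℝ := fun t => ∑ i, Real.exp (a i + t * x i) with hSdef
  set S1 : ℝ → ℝ := fun t => ∑ i, Real.exp (a i + t * x i) * x i with hS1def
  set S2 : ℝ → ℝ := fun t => ∑ i, Real.exp (a i + t * x i) * x i * x i with hS2def
  have hSpos : ∀ t, 0 < S t :=
    fun t => Finset.sum_pos (fun i _ => Real.exp_pos _) Finset.univ_nonempty
  have hlin : ∀ (i : V) (t : ℝ), HasDerivAt (fun t => a i + t * x i) (x i) t := by
    intro i t
    simpa using (hasDerivAt_mul_const (x i)).const_add (a i)
  have hS : ∀ t, HasDerivAt S (S1 t) t := by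
    intro t
    exact HasDerivAt.fun_sum (fun i _ => (hlin i t).exp)
  have hS1 : ∀ t, HasDerivAt S1 (S2 t) t := by
    intro t
    exact HasDerivAt.fun_sum (fun i _ => ((hlin i t).exp).mul_const (x i))
  have hd1 : ∀ t, HasDerivAt (fun t => Real.log (S t)) (S1 t / S t) t :=
    fun t => (hS t).log (ne_of_gt (hSpos t))
  have hd2 : ∀ t, HasDerivAt (fun t => S1 t / S t)
      ((S2 t * S t - S1 t * S1 t) / S t ^ 2) t :=
    fun t => (hS1 t).div (hS t) (ne_of_gt (hSpos t))
  set K : ℝ := 1 / 2 * ∑ i, x i ^ 2 with hK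
  have hKbound : ∀ t ∈ Set.Icc (0:ℝ) 1,
      (S2 t * S t - S1 t * S1 t) / S t ^ 2 ≤ K := by
    intro t _
    rw [div_le_iff₀ (by positivity)]
    exact var_aux (fun i => Real.exp (a i + t * x i)) x
      (fun i => Real.exp_pos _)
  have main := taylor_bound_aux (fun t => Real.log (S t)) (fun t => S1 t / S t)
    (fun t => (S2 t * S t - S1 t * S1 t) / S t ^ 2) K hd1 hd2 hKbound
  have hS1' : S 1 = ∑ i, Real.exp (b i) := by
    rw [hSdef]
    exact Finset.sum_congr rfl fun i _ => by rw [hx]; ring_nf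
  have hS0 : S 0 = ∑ i, Real.exp (a i) := by
    rw [hSdef]
    exact Finset.sum_congr rfl fun i _ => by norm_num
  have hS10 : S1 0 / S 0 = ∑ i, (Real.exp (a i) / ∑ j, Real.exp (a j)) * (b i - a i) := by
    rw [hS1def, hSdef]
    simp only [zero_mul, add_zero]
    rw [Finset.sum_div]
    exact Finset.sum_congr rfl fun i _ => by rw [hx]; ring
  rw [hS10, hS1', hS0] at main
  have : K / 2 = (1/4) * ∑ i, (b i - a i) ^ 2 := by
    rw [hK, hx]; ring
  linarith [main, this.le, this.ge]
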